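/- Let n, s be natural numbers with 1 ≤ s ≤ n. Every intersecting family F ⊆ H^{(0,s)}(n) (i.e., an intersecting family of s-element independent sets of the matching M_n) satisfies |F| ≤ C(n − 1, s − 1) · 2^{s − 1}, where C denotes the binomial coefficient. -/

import Mathlib

/-- The family `H^{(p,s)}(n)`: subsets of `V(M_n) = Fin n × Bool` of cardinality `2p+s`
spanning exactly `p` edges of the perfect matching `M_n`
(whose `i`-th edge joins `(i, false)` and `(i, true)`). -/
def matchFamily (n p s : ℕ) : Finset (Finset (Fin n × Bool)) :=
  Finset.univ.filter (fun H : Finset (Fin n × Bool) =>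
    H.card = 2 * p + s ∧
    (Finset.univ.filter (fun i : Fin n => (i, false) ∈ H ∧ (i, true) ∈ H)).card = p)
/-- A family of finsets is intersecting if any two of its members intersect. -/
def IsIntersecting {α : Type*} [DecidableEq α] (F : Finset (Finset α)) : Prop :=
  ∀ A ∈ F, ∀ B ∈ F, (A ∩ B).Nonempty

namespace MatchAux

/-- Point `m` on the signed circle of length `2n`. -/
def circPt (n : ℕ) (hn : 0 < n) (m : ℕ) : Fin n × Bool :=
  (⟨m % n, Nat.mod_lt m hn⟩, decide (n ≤ m % (2 * n)))

lemma circPt_mod (n : ℕ) (hn : 0 < n) (m : ℕ) :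
    circPt n hn (m % (2 * n)) = circPt n hn m := by
  unfold circPt
  have h1 : m % (2 * n) % n = m % n := Nat.mod_mod_of_dvd m ⟨2, by ring⟩
  have h2 : m % (2 * n) % (2 * n) = m % (2 * n) := Nat.mod_mod_of_dvd _ dvd_rfl
  simp [h1, h2]

lemma circPt_inj {n : ℕ} (hn : 0 < n) {a b : ℕ} (ha : a < 2 * n) (hb : b < 2 * n)
    (h : circPt n hn a = circPt n hn b) : a = b := by
  unfold circPt at h
  have h1 : a % n = b % n := by simpa using congrArg (fun x => (x.1 : Fin n).val) h
  have h2 : (n ≤ a % (2 * n)) = (n ≤ b % (2 * n)) := by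
    simpa using congrArg (fun x => x.2) h
  rw [Nat.mod_eq_of_lt ha, Nat.mod_eq_of_lt hb] at h2
  have ha' : a % n = if a < n then a else a - n := by
    split
    · exact Nat.mod_eq_of_lt ‹_›
    · rw [Nat.mod_eq_sub_mod (by omega), Nat.mod_eq_of_lt (by omega)]
  have hb' : b % n = if b < n then b else b - n := by
    split
    · exact Nat.mod_eq_of_lt ‹_›
    · rw [Nat.mod_eq_sub_mod (by omega), Nat.mod_eq_of_lt (by omega)]
  have := (eq_iff_iff.mp h2)
  split at ha' <;> split at hb' <;> omega

lemma circPt_modEq {n : ℕ} (hn : 0 < n) {a b : ℕ}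
    (h : circPt n hn a = circPt n hn b) : a % (2 * n) = b % (2 * n) :=
  circPt_inj hn (Nat.mod_lt _ (by omega)) (Nat.mod_lt _ (by omega))
    (by rw [circPt_mod, circPt_mod]; exact h)

/-- The interval of length `s` starting at position `j` on the signed circle. -/
def interval (n : ℕ) (hn : 0 < n) (s j : ℕ) : Finset (Fin n × Bool) :=
  (Finset.range s).image (fun t => circPt n hn (j + t))

lemma mem_interval {n : ℕ} (hn : 0 < n) {s j : ℕ} {x : Fin n × Bool} :
    x ∈ interval n hn s j ↔ ∃ t < s, circPt n hn (j + t) = x := by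
  simp [interval]

lemma card_interval {n : ℕ} (hn : 0 < n) {s : ℕ} (hsn : s ≤ n) (j : ℕ) :
    (interval n hn s j).card = s := by
  rw [interval, Finset.card_image_of_injOn, Finset.card_range]
  intro t ht t' ht' h
  simp only [Finset.coe_range, Set.mem_Iio] at ht ht'
  have h1 : j + t ≡ j + t' [MOD 2*n] := circPt_modEq hn h
  have h2 : t ≡ t' [MOD 2*n] := Nat.ModEq.add_left_cancel' j h1
  exact Nat.ModEq.eq_of_lt_of_lt h2 (by omega) (by omega)

/-- Action of the hyperoctahedral group on subsets of `Fin n × Bool`. -/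
def act {n : ℕ} (g : Equiv.Perm (Fin n) × (Fin n → Bool)) (B : Finset (Fin n × Bool)) :
    Finset (Fin n × Bool) :=
  B.image (fun x => (g.1 x.1, xor x.2 (g.2 x.1)))

lemma actMap_inj {n : ℕ} (g : Equiv.Perm (Fin n) × (Fin n → Bool)) :
    Function.Injective (fun x : Fin n × Bool => (g.1 x.1, xor x.2 (g.2 x.1))) := by
  rintro ⟨i, b⟩ ⟨i', b'⟩ h
  simp only [Prod.mk.injEq] at h
  obtain ⟨h1, h2⟩ := h
  have : i = i' := g.1.injective h1
  subst this
  have : b = b' := by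
    cases b <;> cases b' <;> simp_all
  simp [this]

lemma card_act {n : ℕ} (g : Equiv.Perm (Fin n) × (Fin n → Bool)) (B : Finset (Fin n × Bool)) :
    (act g B).card = B.card :=
  Finset.card_image_of_injective _ (actMap_inj g)

lemma act_inter_nonempty {n : ℕ} (g : Equiv.Perm (Fin n) × (Fin n → Bool))
    {B C : Finset (Fin n × Bool)} (h : (act g B ∩ act g C).Nonempty) : (B ∩ C).Nonempty := by
  obtain ⟨x, hx⟩ := h
  rw [Finset.mem_inter] at hx
  obtain ⟨hx1, hx2⟩ := hx
  simp only [act, Finset.mem_image] at hx1 hx2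
  obtain ⟨y, hy, hyx⟩ := hx1
  obtain ⟨z, hz, hzx⟩ := hx2
  have : y = z := actMap_inj g (by simp only []; rw [hyx, hzx])
  exact ⟨y, Finset.mem_inter.2 ⟨hy, this ▸ hz⟩⟩

/-- Katona's lemma: for a fixed circle `g`, at most `s` of the `2n` intervals land in an
intersecting family. -/
lemma katona {n s : ℕ} (hn : 0 < n) (hs1 : 1 ≤ s) (hsn : s ≤ n)
    (F : Finset (Finset (Fin n × Bool))) (hint : IsIntersecting F)
    (g : Equiv.Perm (Fin n) × (Fin n → Bool)) :
    ((Finset.range (2 * n)).filter (fun j => act g (interval n hn s j) ∈ F)).card ≤ s := by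
  set T := (Finset.range (2 * n)).filter (fun j => act g (interval n hn s j) ∈ F) with hT
  rcases T.eq_empty_or_nonempty with h | ⟨j0, hj0⟩
  · rw [h]; simp
  have hj0' := hj0
  rw [hT, Finset.mem_filter, Finset.mem_range] at hj0'
  obtain ⟨hj0lt, hj0F⟩ := hj0'
  -- any two members of T have intersecting intervals
  have key : ∀ j ∈ T, ∀ k ∈ T, ∃ t < s, ∃ t' < s, (j + t) % (2*n) = (k + t') % (2*n) := by
    intro j hj k hk
    rw [hT, Finset.mem_filter] at hj hk
    have hne : ((interval n hn s j) ∩ (interval n hn s k)).Nonempty :=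
      act_inter_nonempty g (hint _ hj.2 _ hk.2)
    obtain ⟨x, hx⟩ := hne
    rw [Finset.mem_inter, mem_interval hn, mem_interval hn] at hx
    obtain ⟨⟨t, ht, hxt⟩, ⟨t', ht', hxt'⟩⟩ := hx
    exact ⟨t, ht, t', ht', circPt_modEq hn (hxt.trans hxt'.symm)⟩
  -- the shift map u
  set u : ℕ → ℕ := fun j => (j + (2*n - j0) + (s - 1)) % (2*n) with hu
  -- u is small on T
  have hsmall : ∀ j ∈ T, u j < 2*s - 1 := by
    intro j hj
    obtain ⟨t, ht, t', ht', hmod⟩ := key j hj j0 hj0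
    have e1 : j + t ≡ j0 + t' [MOD 2*n] := hmod
    have e2 : u j ≡ j + (2*n - j0) + (s-1) [MOD 2*n] := Nat.mod_mod_of_dvd _ dvd_rfl
    have e3 : j + (2*n - j0) + (s-1) + t ≡ (j0 + t') + (2*n - j0) + (s-1) [MOD 2*n] := by
      calc j + (2*n - j0) + (s-1) + t = (j + t) + (2*n - j0) + (s-1) := by ring
        _ ≡ (j0 + t') + (2*n - j0) + (s-1) [MOD 2*n] := by
            exact Nat.ModEq.add_right _ (Nat.ModEq.add_right _ e1)
    have e4 : (j0 + t') + (2*n - j0) + (s-1) = 2*n + (t' + (s-1)) := by omega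
    have e5 : u j + t ≡ t' + (s-1) [MOD 2*n] := by
      calc u j + t ≡ j + (2*n - j0) + (s-1) + t [MOD 2*n] := Nat.ModEq.add_right _ e2
        _ ≡ 2*n + (t' + (s-1)) [MOD 2*n] := e4 ▸ e3
        _ ≡ t' + (s-1) [MOD 2*n] := by
            exact Nat.add_modEq_left
    have e5' : u j ≡ t' + (s-1) - t [MOD 2*n] := by
      have h6 : (t' + (s-1) - t) + t = t' + (s-1) := by omega
      exact (Nat.ModEq.add_right_cancel' t (by rw [h6]; exact e5))
    have hujlt : u j < 2*n := Nat.mod_lt _ (by omega)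
    have : u j = t' + (s-1) - t := Nat.ModEq.eq_of_lt_of_lt e5' hujlt (by omega)
    omega
  -- u is injective on T
  have hinj : Set.InjOn u T := by
    intro j hj k hk h
    have hjlt : j < 2*n := Finset.mem_range.1 (Finset.mem_filter.1 hj).1
    have hklt : k < 2*n := Finset.mem_range.1 (Finset.mem_filter.1 hk).1
    have : j + ((2*n - j0) + (s-1)) ≡ k + ((2*n - j0) + (s-1)) [MOD 2*n] := by
      have : j + (2*n - j0) + (s-1) ≡ k + (2*n - j0) + (s-1) [MOD 2*n] := h
      calc j + ((2*n - j0) + (s-1)) = j + (2*n - j0) + (s-1) := by ring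
        _ ≡ k + (2*n - j0) + (s-1) [MOD 2*n] := this
        _ = k + ((2*n - j0) + (s-1)) := by ring
    exact Nat.ModEq.eq_of_lt_of_lt (Nat.ModEq.add_right_cancel' _ this) hjlt hklt
  -- no two elements of u '' T differ by exactly s
  have hpair : ∀ j ∈ T, ∀ k ∈ T, u k ≠ u j + s := by
    intro j hj k hk habs
    have e0 : k + ((2*n - j0) + (s-1)) ≡ (j + s) + ((2*n - j0) + (s-1)) [MOD 2*n] := by
      calc k + ((2*n - j0) + (s-1)) = k + (2*n - j0) + (s-1) := by ring
        _ ≡ u k [MOD 2*n] := (Nat.mod_mod_of_dvd _ dvd_rfl).symm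
        _ = u j + s := habs
        _ ≡ (j + (2*n - j0) + (s-1)) + s [MOD 2*n] :=
            Nat.ModEq.add_right s (Nat.mod_mod_of_dvd _ dvd_rfl)
        _ = (j + s) + ((2*n - j0) + (s-1)) := by ring
    have e1 : k ≡ j + s [MOD 2*n] := Nat.ModEq.add_right_cancel' _ e0
    obtain ⟨t, ht, t', ht', hmod⟩ := key j hj k hk
    have e2 : j + t ≡ j + (s + t') [MOD 2*n] := by
      calc j + t ≡ k + t' [MOD 2*n] := hmod
        _ ≡ (j + s) + t' [MOD 2*n] := Nat.ModEq.add_right t' e1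
        _ = j + (s + t') := by ring
    have e3 : t ≡ s + t' [MOD 2*n] := Nat.ModEq.add_left_cancel' j e2
    have : t = s + t' := Nat.ModEq.eq_of_lt_of_lt e3 (by omega) (by omega)
    omega
  -- now count
  set U := T.image u with hU
  have hcard : T.card = U.card := (Finset.card_image_of_injOn hinj).symm
  have hUsmall : ∀ a ∈ U, a < 2*s - 1 := by
    intro a ha
    obtain ⟨j, hj, rfl⟩ := Finset.mem_image.1 ha
    exact hsmall j hj
  have hUpair : ∀ a ∈ U, ∀ b ∈ U, b ≠ a + s := by
    intro a ha b hb
    obtain ⟨j, hj, rfl⟩ := Finset.mem_image.1 ha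
    obtain ⟨k, hk, rfl⟩ := Finset.mem_image.1 hb
    exact hpair j hj k hk
  have hmodcase : ∀ a, a < 2*s - 1 → a % s = if a < s then a else a - s := by
    intro a ha
    split
    · exact Nat.mod_eq_of_lt ‹_›
    · rw [Nat.mod_eq_sub_mod (by omega), Nat.mod_eq_of_lt (by omega)]
  have hvinj : Set.InjOn (· % s) U := by
    intro a ha b hb h
    have ha2 := hUsmall a ha
    have hb2 := hUsmall b hb
    have h1 := hmodcase a ha2
    have h2 := hmodcase b hb2
    have h3 := hUpair a ha b hb
    have h4 := hUpair b hb a ha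
    simp only at h
    split at h1 <;> split at h2 <;> omega
  have hsub : U.image (· % s) ⊆ Finset.range s := by
    intro a ha
    obtain ⟨b, _, rfl⟩ := Finset.mem_image.1 ha
    exact Finset.mem_range.2 (Nat.mod_lt _ (by omega))
  calc T.card = U.card := hcard
    _ = (U.image (· % s)).card := (Finset.card_image_of_injOn hvinj).symm
    _ ≤ (Finset.range s).card := Finset.card_le_card hsub
    _ = s := Finset.card_range s
/-- Composition in the hyperoctahedral group (as raw pairs). -/
def comp {n : ℕ} (g h : Equiv.Perm (Fin n) × (Fin n → Bool)) :
    Equiv.Perm (Fin n) × (Fin n → Bool) :=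
  (h.1.trans g.1, fun i => xor (h.2 i) (g.2 (h.1 i)))

lemma act_comp {n : ℕ} (g h : Equiv.Perm (Fin n) × (Fin n → Bool))
    (B : Finset (Fin n × Bool)) : act (comp g h) B = act g (act h B) := by
  unfold act comp
  rw [Finset.image_image]
  apply Finset.image_congr
  rintro ⟨i, b⟩ _
  simp [Bool.xor_assoc]

def ginv {n : ℕ} (g : Equiv.Perm (Fin n) × (Fin n → Bool)) :
    Equiv.Perm (Fin n) × (Fin n → Bool) :=
  (g.1.symm, fun i => g.2 (g.1.symm i))

lemma act_ginv_act {n : ℕ} (g : Equiv.Perm (Fin n) × (Fin n → Bool))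
    (B : Finset (Fin n × Bool)) : act (ginv g) (act g B) = B := by
  unfold act ginv
  rw [Finset.image_image]
  have : ∀ x ∈ B, ((fun x : Fin n × Bool => (g.1.symm x.1, xor x.2 (g.2 (g.1.symm x.1)))) ∘
      fun x : Fin n × Bool => (g.1 x.1, xor x.2 (g.2 x.1))) x = id x := by
    rintro ⟨i, b⟩ _
    simp [Bool.xor_assoc]
  rw [Finset.image_congr this, Finset.image_id]

lemma comp_left_inj {n : ℕ} (q : Equiv.Perm (Fin n) × (Fin n → Bool)) :
    Function.Injective (fun y => comp q y) := by
  rintro ⟨ρ, δ⟩ ⟨ρ', δ'⟩ h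
  unfold comp at h
  simp only [Prod.mk.injEq] at h
  obtain ⟨h1, h2⟩ := h
  have hρ : ρ = ρ' := by
    ext i
    have h := congrArg (fun e => q.1.symm (e i)) h1
    simp only [Equiv.trans_apply, Equiv.symm_apply_apply] at h
    rw [h]
  subst hρ
  refine Prod.ext rfl ?_
  funext i
  have := congrFun h2 i
  cases hqi : q.2 (ρ i) <;> rw [hqi] at this <;> simpa using this

lemma comp_right_inj {n : ℕ} (q : Equiv.Perm (Fin n) × (Fin n → Bool)) :
    Function.Injective (fun y => comp y q) := by
  rintro ⟨ρ, δ⟩ ⟨ρ', δ'⟩ h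
  unfold comp at h
  simp only [Prod.mk.injEq] at h
  obtain ⟨h1, h2⟩ := h
  have hρ : ρ = ρ' := by
    ext i
    have h := congrArg (fun e => e (q.1.symm i)) h1
    simp only [Equiv.trans_apply, Equiv.apply_symm_apply] at h
    rw [h]
  subst hρ
  refine Prod.ext rfl ?_
  funext i
  have := congrFun h2 (q.1.symm i)
  simp only [Equiv.apply_symm_apply] at this
  cases hqi : q.2 (q.1.symm i) <;> rw [hqi] at this <;> simpa using this

/-- A finset of `Fin n × Bool` is "independent" if first coordinates determine elements. -/
def FstInj {n : ℕ} (B : Finset (Fin n × Bool)) : Prop :=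
  ∀ x ∈ B, ∀ y ∈ B, x.1 = y.1 → x = y

lemma fstInj_of_matchFamily {n s : ℕ} {A : Finset (Fin n × Bool)}
    (hA : A ∈ matchFamily n 0 s) : FstInj A := by
  rw [matchFamily, Finset.mem_filter] at hA
  obtain ⟨-, -, hpairs⟩ := hA
  have hp : ∀ i : Fin n, ¬((i, false) ∈ A ∧ (i, true) ∈ A) := by
    intro i hi
    have : i ∈ Finset.univ.filter (fun i : Fin n => (i, false) ∈ A ∧ (i, true) ∈ A) :=
      Finset.mem_filter.2 ⟨Finset.mem_univ i, hi⟩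
    rw [Finset.card_eq_zero.1 hpairs] at this
    exact absurd this (Finset.notMem_empty i)
  rintro ⟨i, b⟩ hx ⟨i', b'⟩ hy h
  simp only at h
  subst h
  cases b <;> cases b'
  · rfl
  · exact absurd ⟨hx, hy⟩ (hp i)
  · exact absurd ⟨hy, hx⟩ (hp i)
  · rfl

lemma card_of_matchFamily {n s : ℕ} {A : Finset (Fin n × Bool)}
    (hA : A ∈ matchFamily n 0 s) : A.card = s := by
  rw [matchFamily, Finset.mem_filter] at hA
  omega

lemma fstInj_interval {n : ℕ} (hn : 0 < n) {s : ℕ} (hsn : s ≤ n) (j : ℕ) :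
    FstInj (interval n hn s j) := by
  intro x hx y hy hfst
  rw [mem_interval hn] at hx hy
  obtain ⟨t, ht, rfl⟩ := hx
  obtain ⟨t', ht', rfl⟩ := hy
  have : (j + t) % n = (j + t') % n := by
    simpa [circPt] using congrArg Fin.val hfst
  have h2 : t ≡ t' [MOD n] := Nat.ModEq.add_left_cancel' j this
  rw [Nat.ModEq.eq_of_lt_of_lt h2 (by omega) (by omega)]

lemma card_image_fst {n : ℕ} {B : Finset (Fin n × Bool)} (hB : FstInj B) :
    (B.image Prod.fst).card = B.card :=
  Finset.card_image_of_injOn fun x hx y hy h => hB x hx y hy h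

/-- Transitivity: some group element maps `B` onto `A`. -/
lemma exists_act_eq {n : ℕ} {B A : Finset (Fin n × Bool)} (hB : FstInj B) (hA : FstInj A)
    (hcard : B.card = A.card) : ∃ g, act g B = A := by
  classical
  set S := B.image Prod.fst with hS
  set T := A.image Prod.fst with hTT
  have hST : Fintype.card {x : Fin n // x ∈ S} = Fintype.card {x : Fin n // x ∈ T} := by
    simp only [Fintype.card_coe]
    rw [card_image_fst hB, card_image_fst hA, hcard]
  have hST' : Fintype.card {x : Fin n // ¬ x ∈ S} = Fintype.card {x : Fin n // ¬ x ∈ T} := by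
    rw [Fintype.card_subtype_compl, Fintype.card_subtype_compl, hST]
  set e1 : {x : Fin n // x ∈ S} ≃ {x : Fin n // x ∈ T} := Fintype.equivOfCardEq hST
  set e2 : {x : Fin n // ¬ x ∈ S} ≃ {x : Fin n // ¬ x ∈ T} := Fintype.equivOfCardEq hST'
  set ρ : Equiv.Perm (Fin n) := Equiv.subtypeCongr e1 e2 with hρdef
  have hρS : ∀ i, (hi : i ∈ S) → ρ i ∈ T := by
    intro i hi
    have : ρ i = (e1 ⟨i, hi⟩ : Fin n) := by
      simp [hρdef, Equiv.subtypeCongr, hi]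
    rw [this]
    exact (e1 ⟨i, hi⟩).2
  set δ : Fin n → Bool := fun i => xor (decide ((i, true) ∈ B)) (decide ((ρ i, true) ∈ A))
    with hδdef
  refine ⟨(ρ, δ), ?_⟩
  have hsub : act (ρ, δ) B ⊆ A := by
    intro x hx
    simp only [act, Finset.mem_image] at hx
    obtain ⟨⟨i, b⟩, hib, rfl⟩ := hx
    have hiS : i ∈ S := Finset.mem_image.2 ⟨(i, b), hib, rfl⟩
    have hρiT : ρ i ∈ T := hρS i hiS
    obtain ⟨⟨i', c⟩, hic, hfst⟩ := Finset.mem_image.1 hρiT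
    simp only at hfst
    subst hfst
    have hb : b = decide ((i, true) ∈ B) := by
      cases b
      · have habs : ¬ ((i, true) ∈ B) := fun habs => by
          have := hB (i, false) hib (i, true) habs rfl
          simp at this
        simp [habs]
      · simp [hib]
    have hxx : ∀ a c : Bool, xor a (xor a c) = c := by decide
    have hδi : xor b (δ i) = decide ((ρ i, true) ∈ A) := by
      rw [hb]
      simp only [hδdef]
      exact hxx _ _
    simp only at hδi ⊢
    rw [hδi]
    by_cases hmem : (ρ i, true) ∈ A
    · simpa [hmem] using hmem
    · have hc : c = false := by
        cases c
        · rfl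
        · exact absurd hic hmem
      simpa [hmem] using hc ▸ hic
  exact Finset.eq_of_subset_of_card_le hsub (by rw [card_act]; omega)
open Fin.NatCast in
/-- Rotation of the circle by `j`, as a group element. -/
def rot {n : ℕ} (hn : 0 < n) (j : ℕ) : Equiv.Perm (Fin n) × (Fin n → Bool) :=
  haveI : NeZero n := ⟨hn.ne'⟩
  (Equiv.addLeft ((j : ℕ) : Fin n), fun i => decide (n ≤ (j + i.val) % (2 * n)))

open Fin.NatCast in
lemma act_rot {n s : ℕ} (hn : 0 < n) (hsn : s ≤ n) (j : ℕ) :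
    act (rot hn j) (interval n hn s 0) = interval n hn s j := by
  haveI : NeZero n := ⟨hn.ne'⟩
  unfold interval act
  rw [Finset.image_image]
  apply Finset.image_congr
  intro t ht
  rw [Finset.coe_range, Set.mem_Iio] at ht
  show ((rot hn j).1 (circPt n hn (0 + t)).1,
      xor (circPt n hn (0 + t)).2 ((rot hn j).2 (circPt n hn (0 + t)).1)) = circPt n hn (j + t)
  have h0t : (0 + t) = t := by omega
  have htn : t % n = t := Nat.mod_eq_of_lt (by omega)
  have ht2n : t % (2 * n) = t := Nat.mod_eq_of_lt (by omega)
  have hsign : (circPt n hn (0 + t)).2 = false := by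
    simp [circPt, h0t, ht2n]
    omega
  have hfst : (circPt n hn (0 + t)).1 = ⟨t, by omega⟩ := by
    simp [circPt, h0t, htn]
  rw [hsign, hfst]
  refine Prod.ext ?_ ?_
  · show (rot hn j).1 ⟨t, _⟩ = (⟨(j + t) % n, _⟩ : Fin n)
    unfold rot
    simp only
    refine Fin.ext ?_
    rw [Equiv.coe_addLeft]
    show (((j : ℕ) : Fin n) + (⟨t, _⟩ : Fin n)).val = (j + t) % n
    rw [Fin.add_def]
    simp only [Fin.val_natCast]
    rw [Nat.add_mod j t n, htn]
  · show xor false _ = _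
    rw [Bool.false_xor]
    rfl

lemma mem_interval_zero {n s : ℕ} (hn : 0 < n) (hsn : s ≤ n) {x : Fin n × Bool} :
    x ∈ interval n hn s 0 ↔ (x.1.val < s ∧ x.2 = false) := by
  rw [mem_interval hn]
  constructor
  · rintro ⟨t, ht, rfl⟩
    have h0t : (0 + t) = t := by omega
    have htn : t % n = t := Nat.mod_eq_of_lt (by omega)
    have ht2n : t % (2 * n) = t := Nat.mod_eq_of_lt (by omega)
    constructor
    · simp [circPt, h0t, htn] <;> omega
    · simp [circPt, h0t, ht2n] <;> omega
  · rintro ⟨h1, h2⟩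
    refine ⟨x.1.val, h1, ?_⟩
    have htn : x.1.val % n = x.1.val := Nat.mod_eq_of_lt x.1.isLt
    have ht2n : x.1.val % (2 * n) = x.1.val := Nat.mod_eq_of_lt (by omega)
    have h0t : (0 + x.1.val) = x.1.val := by omega
    refine Prod.ext ?_ ?_
    · exact Fin.ext (by simp [circPt, h0t, htn])
    · rw [h2]
      simp [circPt, h0t, ht2n] <;> omega

/-- The splitting equivalence `Fin s ⊕ Fin (n-s) ≃ Fin n`. -/
def spl {n s : ℕ} (hsn : s ≤ n) : (Fin s ⊕ Fin (n - s)) ≃ Fin n :=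
  finSumFinEquiv.trans (finCongr (by omega))

lemma spl_inl_val {n s : ℕ} (hsn : s ≤ n) (a : Fin s) : ((spl hsn) (Sum.inl a)).val = a.val := by
  simp [spl]

lemma spl_inr_val {n s : ℕ} (hsn : s ≤ n) (b : Fin (n - s)) : ((spl hsn) (Sum.inr b)).val = s + b.val := by
  simp [spl]

lemma spl_symm_of_lt {n s : ℕ} (hsn : s ≤ n) {i : Fin n} (h : i.val < s) :
    (spl hsn).symm i = Sum.inl ⟨i.val, h⟩ := by
  rw [Equiv.symm_apply_eq]
  exact Fin.ext (spl_inl_val hsn ⟨i.val, h⟩).symm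

lemma spl_symm_of_ge {n s : ℕ} (hsn : s ≤ n) {i : Fin n} (h : ¬ i.val < s) :
    (spl hsn).symm i = Sum.inr ⟨i.val - s, by omega⟩ := by
  rw [Equiv.symm_apply_eq]
  refine Fin.ext ?_
  rw [spl_inr_val hsn]
  show i.val = s + (i.val - s)
  omega

/-- A group element stabilizing the initial interval, built from permutations of the two blocks
and signs on the second block. -/
def stabMap {n s : ℕ} (hsn : s ≤ n)
    (x : Equiv.Perm (Fin s) × Equiv.Perm (Fin (n - s)) × (Fin (n - s) → Bool)) :
    Equiv.Perm (Fin n) × (Fin n → Bool) :=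
  ((spl hsn).symm.trans ((Equiv.sumCongr x.1 x.2.1).trans (spl hsn)),
    fun i => if h : i.val < s then false else x.2.2 ⟨i.val - s, by omega⟩)

lemma stabMap_fst_of_lt {n s : ℕ} (hsn : s ≤ n) (x) {i : Fin n} (h : i.val < s) :
    ((stabMap hsn x).1 i).val = (x.1 ⟨i.val, h⟩).val := by
  unfold stabMap
  simp only [Equiv.trans_apply]
  rw [spl_symm_of_lt hsn h]
  simp only [Equiv.sumCongr_apply, Sum.map_inl]
  exact spl_inl_val hsn _

lemma stabMap_fst_of_ge {n s : ℕ} (hsn : s ≤ n) (x) {i : Fin n} (h : ¬ i.val < s) :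
    ((stabMap hsn x).1 i).val = s + (x.2.1 ⟨i.val - s, by omega⟩).val := by
  unfold stabMap
  simp only [Equiv.trans_apply]
  rw [spl_symm_of_ge hsn h]
  simp only [Equiv.sumCongr_apply, Sum.map_inr]
  exact spl_inr_val hsn _

lemma stabMap_inj {n s : ℕ} (hsn : s ≤ n) : Function.Injective (stabMap (n := n) hsn) := by
  rintro ⟨σ, τ, δ⟩ ⟨σ', τ', δ'⟩ h
  have h1 := congrArg Prod.fst h
  have h2 := congrArg Prod.snd h
  refine Prod.ext ?_ (Prod.ext ?_ ?_)
  · ext a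
    have e1 := stabMap_fst_of_lt hsn (σ, τ, δ) (i := (spl hsn) (Sum.inl a))
      (by rw [spl_inl_val]; exact a.isLt)
    have e2 := stabMap_fst_of_lt hsn (σ', τ', δ') (i := (spl hsn) (Sum.inl a))
      (by rw [spl_inl_val]; exact a.isLt)
    rw [h1] at e1
    rw [e2] at e1
    have harg : ∀ (p : ((spl hsn) (Sum.inl a)).val < s),
        (⟨((spl hsn) (Sum.inl a)).val, p⟩ : Fin s) = a :=
      fun _ => Fin.ext (spl_inl_val hsn a)
    rw [harg] at e1
    exact e1.symm
  · ext b
    have hge : ¬ ((spl hsn) (Sum.inr b)).val < s := by rw [spl_inr_val]; omega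
    have e1 := stabMap_fst_of_ge hsn (σ, τ, δ) (i := (spl hsn) (Sum.inr b)) hge
    have e2 := stabMap_fst_of_ge hsn (σ', τ', δ') (i := (spl hsn) (Sum.inr b)) hge
    rw [h1] at e1
    rw [e2] at e1
    have harg : ∀ (p : ((spl hsn) (Sum.inr b)).val - s < n - s),
        (⟨((spl hsn) (Sum.inr b)).val - s, p⟩ : Fin (n - s)) = b := by
      intro p
      refine Fin.ext ?_
      show ((spl hsn) (Sum.inr b)).val - s = b.val
      rw [spl_inr_val hsn]
      omega
    rw [harg] at e1
    omega
  · funext b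
    have hb : s + b.val < n := by omega
    have := congrFun h2 ⟨s + b.val, hb⟩
    simp only [stabMap] at this
    have hcond : ¬ ((⟨s + b.val, hb⟩ : Fin n).val < s) := by
      show ¬ (s + b.val < s)
      omega
    rw [dif_neg hcond, dif_neg hcond] at this
    have hbb : ∀ (p : s + b.val - s < n - s), (⟨s + b.val - s, p⟩ : Fin (n - s)) = b :=
      fun _ => Fin.ext (show s + b.val - s = b.val by omega)
    rwa [hbb] at this

lemma act_stabMap {n s : ℕ} (hn : 0 < n) (hsn : s ≤ n)
    (x : Equiv.Perm (Fin s) × Equiv.Perm (Fin (n - s)) × (Fin (n - s) → Bool)) :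
    act (stabMap hsn x) (interval n hn s 0) = interval n hn s 0 := by
  refine Finset.eq_of_subset_of_card_le ?_ (by rw [card_act, card_interval hn hsn])
  intro y hy
  simp only [act, Finset.mem_image] at hy
  obtain ⟨⟨i, b⟩, hib, rfl⟩ := hy
  rw [mem_interval_zero hn hsn] at hib
  obtain ⟨h1, h2⟩ := hib
  simp only at h1 h2
  subst h2
  rw [mem_interval_zero hn hsn]
  constructor
  · show ((stabMap hsn x).1 i).val < s
    rw [stabMap_fst_of_lt hsn x h1]
    exact (x.1 ⟨i.val, h1⟩).isLt
  · show xor false ((stabMap hsn x).2 i) = false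
    rw [Bool.false_xor]
    show (if h : i.val < s then false else _) = false
    rw [dif_pos h1]

/-- Lower bound on the number of group elements mapping an interval onto a given member
of the family. -/
lemma fiber_lower {n s : ℕ} (hn : 0 < n) (hs1 : 1 ≤ s) (hsn : s ≤ n)
    {A : Finset (Fin n × Bool)} (hA : A ∈ matchFamily n 0 s) (j : ℕ) :
    s.factorial * ((n - s).factorial * 2 ^ (n - s)) ≤
      (Finset.univ.filter
        (fun g : Equiv.Perm (Fin n) × (Fin n → Bool) =>
          act g (interval n hn s j) = A)).card := by
  classical
  obtain ⟨g₀, hg₀⟩ := exists_act_eq (fstInj_interval hn hsn j) (fstInj_of_matchFamily hA)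
    (by rw [card_interval hn hsn, card_of_matchFamily hA])
  set icj := ginv (rot hn j) with hicj_def
  have hicj : act icj (interval n hn s j) = interval n hn s 0 := by
    rw [← act_rot hn hsn j]
    exact act_ginv_act _ _
  set Ψ : Equiv.Perm (Fin s) × Equiv.Perm (Fin (n - s)) × (Fin (n - s) → Bool) →
      Equiv.Perm (Fin n) × (Fin n → Bool) :=
    fun x => comp g₀ (comp (rot hn j) (comp (stabMap hsn x) icj)) with hΨ
  have hmem : ∀ x, Ψ x ∈ Finset.univ.filter
      (fun g : Equiv.Perm (Fin n) × (Fin n → Bool) => act g (interval n hn s j) = A) := by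
    intro x
    rw [Finset.mem_filter]
    refine ⟨Finset.mem_univ _, ?_⟩
    rw [hΨ]
    simp only
    rw [act_comp, act_comp, act_comp, hicj, act_stabMap hn hsn, act_rot hn hsn, hg₀]
  have hinj : Function.Injective Ψ := by
    intro x y h
    rw [hΨ] at h
    simp only at h
    have h1 := comp_left_inj g₀ h
    have h2 := comp_left_inj (rot hn j) h1
    have h3 := comp_right_inj icj h2
    exact stabMap_inj hsn h3
  calc s.factorial * ((n - s).factorial * 2 ^ (n - s))
      = Fintype.card (Equiv.Perm (Fin s) × Equiv.Perm (Fin (n - s)) × (Fin (n - s) → Bool)) := by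
        simp [Fintype.card_perm]
    _ = (Finset.univ : Finset (Equiv.Perm (Fin s) × Equiv.Perm (Fin (n - s)) ×
          (Fin (n - s) → Bool))).card := (Finset.card_univ).symm
    _ ≤ _ := Finset.card_le_card_of_injOn Ψ (fun x _ => hmem x) (hinj.injOn)
end MatchAux

open MatchAux in
/-- For `1 ≤ s ≤ n`, every intersecting family `F ⊆ H^{(0,s)}(n)` of `s`-element
independent sets of `M_n` satisfies `|F| ≤ C(n-1, s-1) · 2^{s-1}`. -/
theorem matchFamily_0s_intersecting_bound (n s : ℕ) (hs : 1 ≤ s) (hn : s ≤ n)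
    (F : Finset (Finset (Fin n × Bool))) (hF : F ⊆ matchFamily n 0 s)
    (hint : IsIntersecting F) :
    F.card ≤ (n - 1).choose (s - 1) * 2 ^ (s - 1) := by
  classical
  have hn0 : 0 < n := by omega
  set K := s.factorial * ((n - s).factorial * 2 ^ (n - s)) with hK
  -- fiberwise decomposition of the per-circle count
  have hfib : ∀ j : ℕ,
      (Finset.univ.filter (fun g : Equiv.Perm (Fin n) × (Fin n → Bool) =>
        act g (interval n hn0 s j) ∈ F)).card
      = ∑ A ∈ F, (Finset.univ.filter (fun g : Equiv.Perm (Fin n) × (Fin n → Bool) =>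
          act g (interval n hn0 s j) = A)).card := by
    intro j
    rw [Finset.card_eq_sum_card_fiberwise
      (f := fun g : Equiv.Perm (Fin n) × (Fin n → Bool) => act g (interval n hn0 s j))
      (s := Finset.univ.filter (fun g => act g (interval n hn0 s j) ∈ F))
      (t := F) (fun g hg => (Finset.mem_filter.1 hg).2)]
    refine Finset.sum_congr rfl fun A hA => ?_
    congr 1
    rw [Finset.filter_filter]
    refine Finset.filter_congr fun g _ => ?_
    constructor
    · rintro ⟨-, h⟩; exact h
    · intro h
      refine ⟨?_, h⟩
      show act g (interval n hn0 s j) ∈ F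
      rw [h]; exact hA
  -- lower bound for each circle position
  have h1 : ∀ j, F.card * K ≤
      (Finset.univ.filter (fun g : Equiv.Perm (Fin n) × (Fin n → Bool) =>
        act g (interval n hn0 s j) ∈ F)).card := by
    intro j
    rw [hfib j]
    calc F.card * K = ∑ _A ∈ F, K := by rw [Finset.sum_const, smul_eq_mul]
      _ ≤ _ := Finset.sum_le_sum fun A hA => fiber_lower hn0 hs hn (hF hA) j
  -- upper bound via Katona's lemma
  have h2 : ∑ j ∈ Finset.range (2 * n),
      (Finset.univ.filter (fun g : Equiv.Perm (Fin n) × (Fin n → Bool) =>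
        act g (interval n hn0 s j) ∈ F)).card
      ≤ n.factorial * 2 ^ n * s := by
    have hswap : ∑ j ∈ Finset.range (2 * n),
        (Finset.univ.filter (fun g : Equiv.Perm (Fin n) × (Fin n → Bool) =>
          act g (interval n hn0 s j) ∈ F)).card
        = ∑ g : Equiv.Perm (Fin n) × (Fin n → Bool),
            ((Finset.range (2 * n)).filter
              (fun j => act g (interval n hn0 s j) ∈ F)).card := by
      simp only [Finset.card_filter]
      rw [Finset.sum_comm]
    rw [hswap]
    calc ∑ g : Equiv.Perm (Fin n) × (Fin n → Bool),
          ((Finset.range (2 * n)).filter (fun j => act g (interval n hn0 s j) ∈ F)).card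
        ≤ ∑ _g : Equiv.Perm (Fin n) × (Fin n → Bool), s :=
          Finset.sum_le_sum fun g _ => katona hn0 hs hn F hint g
      _ = Fintype.card (Equiv.Perm (Fin n) × (Fin n → Bool)) * s := by
          rw [Finset.sum_const, smul_eq_mul, Finset.card_univ]
      _ = n.factorial * 2 ^ n * s := by
          simp [Fintype.card_perm]
  -- combine
  have h3 : 2 * n * (F.card * K) ≤ n.factorial * 2 ^ n * s := by
    calc 2 * n * (F.card * K) = ∑ _j ∈ Finset.range (2 * n), F.card * K := by
          rw [Finset.sum_const, Finset.card_range, smul_eq_mul]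
      _ ≤ _ := Finset.sum_le_sum fun j _ => h1 j
      _ ≤ n.factorial * 2 ^ n * s := h2
  -- arithmetic identity
  obtain ⟨a, rfl⟩ : ∃ a, s = a + 1 := ⟨s - 1, by omega⟩
  obtain ⟨b, rfl⟩ : ∃ b, n = a + b + 1 := ⟨n - (a + 1), by omega⟩
  have e1 : a + b + 1 - 1 = a + b := by omega
  have e2 : a + 1 - 1 = a := by omega
  have e3 : a + b + 1 - (a + 1) = b := by omega
  rw [e1, e2]
  have key : (a + b).choose a * a.factorial * b.factorial = (a + b).factorial := by
    have := Nat.choose_mul_factorial_mul_factorial (Nat.le_add_right a b)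
    rwa [Nat.add_sub_cancel_left] at this
  have hident : (a + b).choose a * 2 ^ a * (2 * (a + b + 1) * K) =
      (a + b + 1).factorial * 2 ^ (a + b + 1) * (a + 1) := by
    rw [hK, e3, Nat.factorial_succ (a + b), Nat.factorial_succ a]
    calc (a + b).choose a * 2 ^ a *
          (2 * (a + b + 1) * ((a + 1) * a.factorial * (b.factorial * 2 ^ b)))
        = ((a + b).choose a * a.factorial * b.factorial) *
            (2 ^ a * 2 ^ b * 2 * (a + b + 1) * (a + 1)) := by ring
      _ = (a + b).factorial * (2 ^ a * 2 ^ b * 2 * (a + b + 1) * (a + 1)) := by rw [key]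
      _ = (a + b + 1) * (a + b).factorial * (2 ^ a * (2 ^ b * 2)) * (a + 1) := by ring
      _ = (a + b + 1) * (a + b).factorial * 2 ^ (a + b + 1) * (a + 1) := by
          rw [pow_succ, pow_add]; ring
  have hKpos : 0 < 2 * (a + b + 1) * K := by
    rw [hK]
    positivity
  refine Nat.le_of_mul_le_mul_right ?_ hKpos
  calc F.card * (2 * (a + b + 1) * K) = 2 * (a + b + 1) * (F.card * K) := by ring
    _ ≤ (a + b + 1).factorial * 2 ^ (a + b + 1) * (a + 1) := h3
    _ = (a + b).choose a * 2 ^ a * (2 * (a + b + 1) * K) := hident.symm
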